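/- arXiv:2303.14658 — 2 statements merged into one kernel-verified Lean document; each statement's English description precedes it below -/
import Mathlib

section
/- Let 0 < c < 1 and β ∈ [0,1), suppose 0 < R, and suppose the (v,c)-central condition holds with v(ε) = ε^{1−β}: for every ε > 0, log ∫ exp(−ε^{1−β}·r) d(P_W ⊗ μ) ≤ −c·ε^{1−β}·R + ε^{2−β}. Then the expected generalization error satisfies the intermediate-rate bound gen ≤ ((1 − c)/c)·R̂ + ((1−β)^{1/(2−β)}·(2−β)/(c·(1−β)))·(1/n) ∑_{i=1}^n I(W;Z_i)^{1/(2−β)}. -/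
open MeasureTheory Real

section AuxLemmas

lemma klReal_nonneg' {α : Type*} [MeasurableSpace α] (P Q : Measure α)
    [IsProbabilityMeasure P] [IsProbabilityMeasure Q]
    (hPQ : P ≪ Q) (h : Integrable (llr P Q) P) : 0 ≤ ∫ x, llr P Q x ∂P := by
  have hint : Integrable (fun x => (Q.rnDeriv P x).toReal) P :=
    Measure.integrable_toReal_rnDeriv
  have heq : (fun x => Real.exp (- llr P Q x)) =ᵐ[P] fun x => (Q.rnDeriv P x).toReal :=
    exp_neg_llr hPQ
  have hgi : Integrable (Real.exp ∘ (fun x => - llr P Q x)) P :=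
    (integrable_congr heq).mpr hint
  have hjen : Real.exp (∫ x, - llr P Q x ∂P) ≤ ∫ x, Real.exp (- llr P Q x) ∂P :=
    convexOn_exp.map_integral_le Real.continuous_exp.continuousOn isClosed_univ
      (Filter.Eventually.of_forall fun _ => Set.mem_univ _) h.neg hgi
  have hle : ∫ x, Real.exp (- llr P Q x) ∂P ≤ 1 := by
    rw [integral_congr_ae heq]
    calc ∫ x, (Q.rnDeriv P x).toReal ∂P
        ≤ (Q Set.univ).toReal := by
          rw [← setIntegral_univ]
          exact Measure.setIntegral_toReal_rnDeriv_le (by simp)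
      _ = 1 := by simp
  have h0 : ∫ x, - llr P Q x ∂P ≤ 0 := Real.exp_le_one_iff.mp (hjen.trans hle)
  rw [integral_neg] at h0
  linarith

lemma dv_le' {α : Type*} [MeasurableSpace α] (P Q : Measure α)
    [IsProbabilityMeasure P] [IsProbabilityMeasure Q]
    (hPQ : P ≪ Q) (hllr : Integrable (llr P Q) P)
    {f : α → ℝ} (hfP : Integrable f P) (hfQ : Integrable (fun x => Real.exp (f x)) Q) :
    ∫ x, f x ∂P ≤ (∫ x, llr P Q x ∂P) + Real.log (∫ x, Real.exp (f x) ∂Q) := by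
  have hν : IsProbabilityMeasure (Q.tilted f) := isProbabilityMeasure_tilted hfQ
  have hPν : P ≪ Q.tilted f := hPQ.trans (absolutelyContinuous_tilted hfQ)
  have hillr : Integrable (llr P (Q.tilted f)) P :=
    integrable_llr_tilted_right hPQ hfP hllr hfQ
  have hkl : 0 ≤ ∫ x, llr P (Q.tilted f) x ∂P := klReal_nonneg' _ _ hPν hillr
  rw [integral_llr_tilted_right hPQ hfP hfQ hllr] at hkl
  linarith

lemma opt_bound' {β : ℝ} (hβ1 : β < 1) {I D : ℝ} (hI : 0 ≤ I)
    (h : ∀ ε : ℝ, 0 < ε → D ≤ ε + I * ε ^ (β - 1)) :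
    D ≤ ((1 - β) ^ ((1:ℝ)/(2-β)) * (2-β) / (1-β)) * I ^ ((1:ℝ)/(2-β)) := by
  have ht : (0:ℝ) < 2 - β := by linarith
  have h1β : (0:ℝ) < 1 - β := by linarith
  rcases eq_or_lt_of_le hI with hI0 | hIpos
  · have hD : D ≤ 0 := by
      refine le_of_forall_pos_le_add fun ε hε => ?_
      have := h ε hε
      rw [← hI0] at this
      simpa using this
    have hz : ((0:ℝ)) ^ ((1:ℝ)/(2-β)) = 0 := by
      rw [Real.zero_rpow]; positivity
    rw [← hI0, hz, mul_zero]
    exact hD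
  · have hxpos : 0 < (1 - β) * I := mul_pos h1β hIpos
    have hεpos : 0 < ((1 - β) * I) ^ ((1:ℝ)/(2-β)) := Real.rpow_pos_of_pos hxpos _
    refine (h _ hεpos).trans_eq ?_
    have e1 : (((1 - β) * I) ^ ((1:ℝ)/(2-β))) ^ (β - 1)
        = ((1 - β) * I) ^ ((1:ℝ)/(2-β)) / ((1 - β) * I) := by
      rw [← Real.rpow_mul hxpos.le]
      have he : (1:ℝ)/(2-β) * (β - 1) = (1:ℝ)/(2-β) - 1 := by
        field_simp; ring
      rw [he, Real.rpow_sub hxpos, Real.rpow_one]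
    rw [e1, Real.mul_rpow h1β.le hI]
    have hIne : I ≠ 0 := hIpos.ne'
    have h1βne : (1:ℝ) - β ≠ 0 := h1β.ne'
    field_simp
    ring

lemma pi_map_eval' {ι : Type*} [Fintype ι] [DecidableEq ι] {α : ι → Type*}
    [∀ i, MeasurableSpace (α i)]
    (μ : ∀ i, Measure (α i)) [∀ i, IsProbabilityMeasure (μ i)] (i : ι) :
    (Measure.pi μ).map (Function.eval i) = μ i := by
  ext s hs
  rw [Measure.map_apply (measurable_pi_apply i) hs]
  have hpre : Function.eval i ⁻¹' s
      = Set.pi Set.univ (Function.update (fun j => (Set.univ : Set (α j))) i s) := by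
    ext x
    simp only [Set.mem_preimage, Set.mem_univ_pi, Function.update_apply]
    constructor
    · intro hx j
      by_cases hj : j = i
      · subst hj; simpa using hx
      · simp [hj]
    · intro hx
      have := hx i
      simpa using this
  rw [hpre, Measure.pi_pi]
  rw [Fintype.prod_eq_single i (fun j hj => by simp [Function.update_of_ne hj])]
  simp

end AuxLemmas

/-- Real-valued Kullback–Leibler divergence `D(P‖Q)`,
the integral of the log-likelihood ratio with respect to `P`. -/
noncomputable def klReal {α : Type*} [MeasurableSpace α] (P Q : Measure α) : ℝ :=
  ∫ x, llr P Q x ∂P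

variable {W Z : Type*} [MeasurableSpace W] [MeasurableSpace Z]

/-- Population risk `L(w) = ∫ ℓ(w,z) dμ(z)`. -/
noncomputable def popRisk (μ : Measure Z) (ℓ : W × Z → ℝ) (w : W) : ℝ :=
  ∫ z, ℓ (w, z) ∂μ

/-- Empirical risk `L̂(w,s) = (1/n) ∑ i, ℓ(w, s i)`. -/
noncomputable def empRisk (n : ℕ) (ℓ : W × Z → ℝ) (w : W) (s : Fin n → Z) : ℝ :=
  (1 / (n : ℝ)) * ∑ i, ℓ (w, s i)

/-- Expected generalization error `gen = E_P[L(W) − L̂(W,S_n)]`. -/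
noncomputable def genErr (μ : Measure Z) (n : ℕ) (P : Measure (W × (Fin n → Z)))
    (ℓ : W × Z → ℝ) : ℝ :=
  ∫ p, (popRisk μ ℓ p.1 - empRisk n ℓ p.1 p.2) ∂P

/-- Expected empirical excess risk `R̂ = E_P[L̂(W,S_n) − L̂(w*,S_n)]`. -/
noncomputable def empExcess (n : ℕ) (P : Measure (W × (Fin n → Z)))
    (ℓ : W × Z → ℝ) (wstar : W) : ℝ :=
  ∫ p, (empRisk n ℓ p.1 p.2 - empRisk n ℓ wstar p.2) ∂P

/-- Expected excess risk `R = ∫ r d(P_W ⊗ μ)` where `r(w,z) = ℓ(w,z) − ℓ(w*,z)`. -/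
noncomputable def excessRisk (μ : Measure Z) {n : ℕ} (P : Measure (W × (Fin n → Z)))
    (ℓ : W × Z → ℝ) (wstar : W) : ℝ :=
  ∫ p, (ℓ p - ℓ (wstar, p.2)) ∂((P.map Prod.fst).prod μ)

/-- Joint law `P_i` of `(W, Z_i)`: the pushforward of `P` under `(w,z) ↦ (w, z_i)`. -/
noncomputable def jointLaw {n : ℕ} (P : Measure (W × (Fin n → Z))) (i : Fin n) :
    Measure (W × Z) :=
  P.map fun p => (p.1, p.2 i)

/-- Mutual information `I(W;Z_i) = D(P_i ‖ P_W ⊗ μ)`. -/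
noncomputable def mutInfo (μ : Measure Z) {n : ℕ} (P : Measure (W × (Fin n → Z)))
    (i : Fin n) : ℝ :=
  klReal (jointLaw P i) ((P.map Prod.fst).prod μ)

theorem intermediate_rate_bound
    (μ : Measure Z) [IsProbabilityMeasure μ] (n : ℕ) (hn : 0 < n)
    (P : Measure (W × (Fin n → Z))) [IsProbabilityMeasure P]
    (hmarg : P.map Prod.snd = Measure.pi fun _ : Fin n => μ)
    (ℓ : W × Z → ℝ) (hℓ : Measurable ℓ) (wstar : W)
    (hint : Integrable ℓ ((P.map Prod.fst).prod μ))
    (hinti : ∀ i : Fin n, Integrable ℓ (jointLaw P i))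
    (hintw : Integrable (fun z => ℓ (wstar, z)) μ)
    (hac : ∀ i : Fin n, jointLaw P i ≪ (P.map Prod.fst).prod μ)
    (hIfin : ∀ i : Fin n, Integrable (llr (jointLaw P i) ((P.map Prod.fst).prod μ))
      (jointLaw P i))
    (c β : ℝ) (hc : 0 < c) (hc1 : c < 1) (hβ0 : 0 ≤ β) (hβ1 : β < 1)
    (hR : 0 < excessRisk μ P ℓ wstar)
    (hmgfInt : ∀ ε : ℝ, 0 < ε →
      Integrable (fun p => Real.exp (-(ε ^ (1 - β)) * (ℓ p - ℓ (wstar, p.2))))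
        ((P.map Prod.fst).prod μ))
    (hcentral : ∀ ε : ℝ, 0 < ε →
      Real.log (∫ p, Real.exp (-(ε ^ (1 - β)) * (ℓ p - ℓ (wstar, p.2)))
          ∂((P.map Prod.fst).prod μ)) ≤
        -c * ε ^ (1 - β) * excessRisk μ P ℓ wstar + ε ^ (2 - β)) :
    genErr μ n P ℓ ≤
      ((1 - c) / c) * empExcess n P ℓ wstar +
        ((1 - β) ^ ((1 : ℝ) / (2 - β)) * (2 - β) / (c * (1 - β))) *
          ((1 / (n : ℝ)) * ∑ i : Fin n, mutInfo μ P i ^ ((1 : ℝ) / (2 - β))) := by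
  classical
  haveI hPW : IsProbabilityMeasure (P.map Prod.fst) :=
    Measure.isProbabilityMeasure_map measurable_fst.aemeasurable
  set Q := (P.map Prod.fst).prod μ with hQ
  haveI : IsProbabilityMeasure Q := by rw [hQ]; infer_instance
  have he : ∀ i : Fin n, Measurable (fun p : W × (Fin n → Z) => (p.1, p.2 i)) :=
    fun i => measurable_fst.prodMk ((measurable_pi_apply i).comp measurable_snd)
  have hPiProb : ∀ i : Fin n, IsProbabilityMeasure (jointLaw P i) :=
    fun i => Measure.isProbabilityMeasure_map (he i).aemeasurable
  have hgw : Measurable (fun z => ℓ (wstar, z)) := hℓ.comp measurable_prodMk_left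
  -- marginals
  have hm1 : ∀ i : Fin n, P.map (fun p : W × (Fin n → Z) => p.2 i) = μ := by
    intro i
    have h1 : (fun p : W × (Fin n → Z) => p.2 i) = (Function.eval i) ∘ Prod.snd := rfl
    rw [h1, ← Measure.map_map (measurable_pi_apply i) measurable_snd, hmarg, pi_map_eval']
  have hm2 : ∀ i : Fin n, (jointLaw P i).map Prod.snd = μ := by
    intro i
    rw [jointLaw, Measure.map_map measurable_snd (he i)]
    exact hm1 i
  have hmQ : Q.map Prod.snd = μ := by
    rw [hQ, Measure.map_snd_prod, measure_univ, one_smul]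
  -- integrabilities
  set Lstar := ∫ z, ℓ (wstar, z) ∂μ with hLstar
  have hstar_i : ∀ i : Fin n, Integrable (fun p : W × Z => ℓ (wstar, p.2)) (jointLaw P i) := by
    intro i
    have h2 : Integrable (fun z => ℓ (wstar, z)) ((jointLaw P i).map Prod.snd) := by
      rw [hm2 i]; exact hintw
    exact (integrable_map_measure hgw.aestronglyMeasurable measurable_snd.aemeasurable).mp h2
  have hstar_Q : Integrable (fun p : W × Z => ℓ (wstar, p.2)) Q := by
    have h2 : Integrable (fun z => ℓ (wstar, z)) (Q.map Prod.snd) := by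
      rw [hmQ]; exact hintw
    exact (integrable_map_measure hgw.aestronglyMeasurable measurable_snd.aemeasurable).mp h2
  have hri : ∀ i : Fin n, Integrable (fun p : W × Z => ℓ p - ℓ (wstar, p.2)) (jointLaw P i) :=
    fun i => (hinti i).sub (hstar_i i)
  have hLstar_i : ∀ i : Fin n, ∫ p, ℓ (wstar, p.2) ∂(jointLaw P i) = Lstar := by
    intro i
    have h3 := integral_map (f := fun z => ℓ (wstar, z))
      measurable_snd.aemeasurable hgw.aestronglyMeasurable (φ := Prod.snd) (μ := jointLaw P i)
    rw [hm2 i] at h3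
    exact h3.symm
  have hLstar_Q : ∫ p, ℓ (wstar, p.2) ∂Q = Lstar := by
    have h3 := integral_map (f := fun z => ℓ (wstar, z))
      measurable_snd.aemeasurable hgw.aestronglyMeasurable (φ := Prod.snd) (μ := Q)
    rw [hmQ] at h3
    exact h3.symm
  -- E i
  set E : Fin n → ℝ := fun i => ∫ p, ℓ p ∂(jointLaw P i) with hE
  have hAi : ∀ i : Fin n, ∫ p, (ℓ p - ℓ (wstar, p.2)) ∂(jointLaw P i) = E i - Lstar := by
    intro i
    rw [integral_sub (hinti i) (hstar_i i), hLstar_i i]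
  -- excess risk split
  have hRQ : excessRisk μ P ℓ wstar = (∫ p, ℓ p ∂Q) - Lstar := by
    rw [excessRisk, ← hQ, integral_sub hint hstar_Q, hLstar_Q]
  -- P level integrabilities
  have hg2 : ∀ i : Fin n, Integrable (fun p : W × (Fin n → Z) => ℓ (p.1, p.2 i)) P := by
    intro i
    exact (integrable_map_measure hℓ.aestronglyMeasurable (he i).aemeasurable).mp (hinti i)
  have hg3 : ∀ i : Fin n, Integrable (fun p : W × (Fin n → Z) => ℓ (wstar, p.2 i)) P := by
    intro i
    have h2 : Integrable (fun z => ℓ (wstar, z)) (P.map (fun p : W × (Fin n → Z) => p.2 i)) := by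
      rw [hm1 i]; exact hintw
    exact (integrable_map_measure hgw.aestronglyMeasurable
      ((measurable_pi_apply i).comp measurable_snd).aemeasurable).mp h2
  have hpm : StronglyMeasurable (popRisk μ ℓ) := by
    unfold popRisk
    exact hℓ.stronglyMeasurable.integral_prod_right'
  have hg1 : Integrable (fun p : W × (Fin n → Z) => popRisk μ ℓ p.1) P := by
    have h1 : Integrable (popRisk μ ℓ) (P.map Prod.fst) := by
      have := hint.integral_prod_left
      exact this
    exact (integrable_map_measure hpm.aestronglyMeasurable measurable_fst.aemeasurable).mp h1
  -- P level integrals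
  have hg2int : ∀ i : Fin n, ∫ p, ℓ (p.1, p.2 i) ∂P = E i := by
    intro i
    rw [hE]
    exact (integral_map (he i).aemeasurable hℓ.aestronglyMeasurable).symm
  have hg3int : ∀ i : Fin n, ∫ p, ℓ (wstar, p.2 i) ∂P = Lstar := by
    intro i
    have h3 := integral_map (f := fun z => ℓ (wstar, z))
      (φ := fun p : W × (Fin n → Z) => p.2 i)
      ((measurable_pi_apply i).comp measurable_snd).aemeasurable hgw.aestronglyMeasurable
      (μ := P)
    rw [hm1 i] at h3
    exact h3.symm
  have hg1int : ∫ p, popRisk μ ℓ p.1 ∂P = ∫ p, ℓ p ∂Q := by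
    have h1 : ∫ p, popRisk μ ℓ p.1 ∂P = ∫ w, popRisk μ ℓ w ∂(P.map Prod.fst) :=
      (integral_map measurable_fst.aemeasurable hpm.aestronglyMeasurable).symm
    rw [h1, hQ, integral_prod _ hint]
    rfl
  -- empirical risk integrability and integrals
  have hempP : Integrable (fun p : W × (Fin n → Z) => empRisk n ℓ p.1 p.2) P := by
    unfold empRisk
    exact (integrable_finset_sum _ (fun i _ => hg2 i)).const_mul _
  have hempwP : Integrable (fun p : W × (Fin n → Z) => empRisk n ℓ wstar p.2) P := by
    unfold empRisk
    exact (integrable_finset_sum _ (fun i _ => hg3 i)).const_mul _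
  have hnpos : (0:ℝ) < n := by exact_mod_cast hn
  have hempint : ∫ p, empRisk n ℓ p.1 p.2 ∂P = (1/(n:ℝ)) * ∑ i, E i := by
    unfold empRisk
    rw [integral_const_mul, integral_finset_sum _ (fun i _ => hg2 i)]
    congr 1
    exact Finset.sum_congr rfl (fun i _ => hg2int i)
  have hempwint : ∫ p, empRisk n ℓ wstar p.2 ∂P = Lstar := by
    unfold empRisk
    rw [integral_const_mul, integral_finset_sum _ (fun i _ => hg3 i)]
    rw [Finset.sum_congr rfl (fun i _ => hg3int i), Finset.sum_const, Finset.card_univ,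
      Fintype.card_fin, nsmul_eq_mul]
    field_simp
  have hgen : genErr μ n P ℓ = (∫ p, ℓ p ∂Q) - (1/(n:ℝ)) * ∑ i, E i := by
    rw [genErr, integral_sub hg1 hempP, hg1int, hempint]
  have hemp : empExcess n P ℓ wstar = (1/(n:ℝ)) * (∑ i, E i) - Lstar := by
    rw [empExcess, integral_sub hempP hempwP, hempint, hempwint]
  -- per-i key bound
  set C' : ℝ := (1 - β) ^ ((1:ℝ)/(2-β)) * (2-β) / (1-β) with hC'
  set R := excessRisk μ P ℓ wstar with hRdef
  have key : ∀ i : Fin n, c * R - (E i - Lstar)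
      ≤ C' * (mutInfo μ P i) ^ ((1:ℝ)/(2-β)) := by
    intro i
    haveI := hPiProb i
    have hI0 : 0 ≤ mutInfo μ P i := klReal_nonneg' _ _ (hac i) (hIfin i)
    refine opt_bound' hβ1 hI0 ?_
    intro ε hε
    have hlam : 0 < ε ^ (1-β) := Real.rpow_pos_of_pos hε _
    have hfP : Integrable (fun p : W × Z => -(ε ^ (1-β)) * (ℓ p - ℓ (wstar, p.2)))
        (jointLaw P i) := (hri i).const_mul _
    have hdv := dv_le' (jointLaw P i) Q (hac i) (hIfin i) hfP (hmgfInt ε hε)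
    rw [integral_const_mul, hAi i] at hdv
    have hcc := hcentral ε hε
    have hIeq : ∫ x, llr (jointLaw P i) Q x ∂(jointLaw P i) = mutInfo μ P i := rfl
    rw [hIeq] at hdv
    have h2β : ε ^ ((2:ℝ)-β) = ε ^ ((1:ℝ)-β) * ε := by
      rw [show (2:ℝ)-β = (1-β)+1 by ring, Real.rpow_add hε, Real.rpow_one]
    have hβ1' : ε ^ (β-1) = (ε ^ ((1:ℝ)-β))⁻¹ := by
      rw [show β-1 = -(1-β) by ring, Real.rpow_neg hε.le]
    rw [hβ1']
    have h3 : c * (ε ^ ((1:ℝ)-β)) * R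
        ≤ (ε ^ ((1:ℝ)-β)) * (E i - Lstar) + mutInfo μ P i + (ε ^ ((1:ℝ)-β)) * ε := by
      have := hdv.trans (by linarith [hcc] : mutInfo μ P i +
        Real.log (∫ p, Real.exp (-(ε ^ (1 - β)) * (ℓ p - ℓ (wstar, p.2))) ∂Q)
        ≤ mutInfo μ P i + (-c * ε ^ (1 - β) * R + ε ^ (2-β)))
      rw [h2β] at this
      linarith
    have hgoal : ε ^ ((1:ℝ)-β) * (c * R - (E i - Lstar))
        ≤ ε ^ ((1:ℝ)-β) * (ε + mutInfo μ P i * (ε ^ ((1:ℝ)-β))⁻¹) := by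
      have h4 : ε ^ ((1:ℝ)-β) * (ε + mutInfo μ P i * (ε ^ ((1:ℝ)-β))⁻¹)
          = ε ^ ((1:ℝ)-β) * ε + mutInfo μ P i := by
        field_simp
      rw [h4]
      nlinarith [h3]
    exact le_of_mul_le_mul_left hgoal hlam
  -- sum over i
  have hsum := Finset.sum_le_sum (fun i (_ : i ∈ Finset.univ) => key i)
  rw [Finset.sum_sub_distrib, Finset.sum_const, Finset.card_univ, Fintype.card_fin,
    nsmul_eq_mul, ← Finset.mul_sum] at hsum
  have hsubE : ∑ i : Fin n, (E i - Lstar) = (∑ i, E i) - n * Lstar := by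
    rw [Finset.sum_sub_distrib, Finset.sum_const, Finset.card_univ, Fintype.card_fin,
      nsmul_eq_mul]
  rw [hsubE] at hsum
  set SI := ∑ i : Fin n, mutInfo μ P i ^ ((1:ℝ)/(2-β)) with hSI
  set SE := ∑ i : Fin n, E i with hSE
  have hgenR : genErr μ n P ℓ = R - empExcess n P ℓ wstar := by
    rw [hgen, hemp, hRQ]; ring
  have hKC : (1 - β) ^ ((1:ℝ)/(2-β)) * (2-β) / (c * (1-β)) = C' / c := by
    rw [hC', div_div, mul_comm (1-β) c]
  rw [hgenR, hKC]
  have hne : (n:ℝ) ≠ 0 := hnpos.ne'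
  have hmain : c * R ≤ empExcess n P ℓ wstar + C' * ((1/(n:ℝ)) * SI) := by
    rw [hemp]
    rw [← mul_le_mul_iff_right₀ hnpos]
    have expand : (n:ℝ) * ((1/(n:ℝ) * SE - Lstar) + C' * ((1/(n:ℝ)) * SI))
        = SE - (n:ℝ) * Lstar + C' * SI := by
      field_simp
    rw [expand]
    linarith [hsum]
  have h5 : R - empExcess n P ℓ wstar
      ≤ ((1-c) * empExcess n P ℓ wstar + C' * ((1/(n:ℝ)) * SI)) / c := by
    rw [le_div_iff₀ hc]
    have hexp : (R - empExcess n P ℓ wstar) * c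
        = c * R - c * empExcess n P ℓ wstar := by ring
    rw [hexp]
    nlinarith [hmain]
  calc R - empExcess n P ℓ wstar
      ≤ ((1-c) * empExcess n P ℓ wstar + C' * ((1/(n:ℝ)) * SI)) / c := h5
    _ = (1-c)/c * empExcess n P ℓ wstar + C'/c * ((1/(n:ℝ)) * SI) := by
        field_simp
end

section
/- Expected Bernstein inequality: let (Ω, Q) be a probability space and let U : Ω → ℝ be square-integrable with U ≥ −b Q-almost surely for some b > 0. Define κ(x) := (e^x − x − 1)/x² for x ≠ 0. Then for every η > 0 and every constant c_η ≥ κ(η·b), one has log E_Q[exp(η·(E_Q[U] − U))] ≤ η²·c_η·E_Q[U²]. -/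
open MeasureTheory Real

/-- `κ(x) = (e^x − x − 1)/x²`. -/
noncomputable def kappa (x : ℝ) : ℝ := (Real.exp x - x - 1) / x ^ 2

lemma summable_aux (c : ℝ) (hc : 0 ≤ c) :
    Summable (fun n : ℕ => c ^ n / (Nat.factorial (n + 2) : ℝ)) := by
  refine Summable.of_nonneg_of_le (fun n => by positivity) (fun n => ?_)
    (Real.summable_pow_div_factorial c)
  exact div_le_div_of_nonneg_left (by positivity) (by positivity)
    (by exact_mod_cast Nat.factorial_le (by omega))

lemma summable_shift (z : ℝ) :
    Summable (fun n : ℕ => z ^ (n + 2) / (Nat.factorial (n + 2) : ℝ)) := by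
  have := Real.summable_pow_div_factorial z
  exact (_root_.summable_nat_add_iff 2).2 this

lemma exp_eq_series (z : ℝ) :
    Real.exp z = 1 + z + ∑' n : ℕ, z ^ (n + 2) / (Nat.factorial (n + 2) : ℝ) := by
  have h : Real.exp z = ∑' n : ℕ, z ^ n / (Nat.factorial n : ℝ) := by
    rw [Real.exp_eq_exp_ℝ, NormedSpace.exp_eq_tsum_div]
  have hs := Real.summable_pow_div_factorial z
  rw [h, Summable.tsum_eq_zero_add hs, Summable.tsum_eq_zero_add ((_root_.summable_nat_add_iff 1).2 hs)]
  simp [Nat.factorial]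
  ring

lemma kappa_eq_tsum (c : ℝ) (hc : 0 < c) :
    kappa c = ∑' n : ℕ, c ^ n / (Nat.factorial (n + 2) : ℝ) := by
  have h := exp_eq_series c
  have h2 : ∀ n : ℕ, c ^ (n + 2) / (Nat.factorial (n + 2) : ℝ) = c ^ 2 * (c ^ n / (Nat.factorial (n + 2) : ℝ)) := by
    intro n; rw [pow_add]; ring
  rw [kappa]
  rw [show Real.exp c - c - 1 = ∑' n : ℕ, c ^ (n + 2) / (Nat.factorial (n + 2) : ℝ) by rw [h]; ring]
  simp_rw [h2]
  rw [tsum_mul_left]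
  field_simp

lemma half_le_kappa (c : ℝ) (hc : 0 < c) : 1 / 2 ≤ kappa c := by
  rw [kappa_eq_tsum c hc]
  have := Summable.le_tsum (summable_aux c hc.le) 0 (fun n _ => by positivity)
  simpa [Nat.factorial] using this

lemma exp_le_quad_of_nonpos (z : ℝ) (hz : z ≤ 0) :
    Real.exp z ≤ 1 + z + z ^ 2 / 2 := by
  have hanti : Antitone (fun x : ℝ => 1 + x + x ^ 2 / 2 - Real.exp x) := by
    apply antitone_of_deriv_nonpos
    · fun_prop
    · intro x
      have hd : HasDerivAt (fun x : ℝ => 1 + x + x ^ 2 / 2 - Real.exp x)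
          (0 + 1 + (2 : ℕ) * x ^ 1 / 2 - Real.exp x) x :=
        (((hasDerivAt_const x (1 : ℝ)).add (hasDerivAt_id x)).add
          ((hasDerivAt_pow 2 x).div_const 2)).sub (Real.hasDerivAt_exp x)
      rw [hd.deriv]
      have := Real.add_one_le_exp x
      simp only [Nat.cast_ofNat, pow_one]
      linarith
  have := hanti hz
  simpa using this

lemma key_ineq (c z : ℝ) (hc : 0 < c) (hz : z ≤ c) :
    Real.exp z ≤ 1 + z + kappa c * z ^ 2 := by
  rcases le_or_gt z 0 with h0 | h0
  · have h1 := exp_le_quad_of_nonpos z h0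
    have h2 := half_le_kappa c hc
    nlinarith [sq_nonneg z]
  · rw [exp_eq_series z]
    have hterm : ∀ n : ℕ, z ^ (n + 2) / (Nat.factorial (n + 2) : ℝ) ≤ z ^ 2 * (c ^ n / (Nat.factorial (n + 2) : ℝ)) := by
      intro n
      rw [pow_add]
      have : z ^ n ≤ c ^ n := pow_le_pow_left₀ h0.le hz n
      rw [mul_comm (z ^ n) (z ^ 2), mul_div_assoc]
      gcongr
    have hsum1 := summable_shift z
    have hsum2 := (summable_aux c hc.le).mul_left (z ^ 2)
    have := Summable.tsum_le_tsum hterm hsum1 hsum2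
    rw [tsum_mul_left] at this
    rw [kappa_eq_tsum c hc]
    nlinarith [this]

/-- **Expected Bernstein inequality.** If `U` is square-integrable and `U ≥ −b` almost
surely, then for every `η > 0` and every `c_η ≥ κ(η·b)`,
`log E[exp(η·(E[U] − U))] ≤ η²·c_η·E[U²]`. -/
theorem expected_bernstein
    {Ω : Type*} [MeasurableSpace Ω] (Q : Measure Ω) [IsProbabilityMeasure Q]
    (U : Ω → ℝ) (hU2 : MemLp U 2 Q)
    (b : ℝ) (hb : 0 < b) (hUb : ∀ᵐ ω ∂Q, -b ≤ U ω) :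
    ∀ η : ℝ, 0 < η → ∀ cη : ℝ, kappa (η * b) ≤ cη →
      Real.log (∫ ω, Real.exp (η * ((∫ ω', U ω' ∂Q) - U ω)) ∂Q) ≤
        η ^ 2 * cη * ∫ ω, (U ω) ^ 2 ∂Q := by
  intro η hη cη hcη
  set m : ℝ := ∫ ω', U ω' ∂Q with hm
  have hc : 0 < η * b := mul_pos hη hb
  have hUint : Integrable U Q := hU2.integrable one_le_two
  have hU2int : Integrable (fun ω => U ω ^ 2) Q := hU2.integrable_sq
  have hmeas : AEStronglyMeasurable (fun ω => Real.exp (-η * U ω)) Q :=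
    (Real.continuous_exp.comp_aestronglyMeasurable
      (hU2.aestronglyMeasurable.const_mul (-η)))
  -- pointwise bound
  have hpt : ∀ᵐ ω ∂Q, Real.exp (-η * U ω) ≤
      1 + (-η * U ω) + cη * η ^ 2 * U ω ^ 2 := by
    filter_upwards [hUb] with ω hω
    have hz : -η * U ω ≤ η * b := by nlinarith
    have := key_ineq (η * b) (-η * U ω) hc hz
    have hk : kappa (η * b) * (-η * U ω) ^ 2 ≤ cη * η ^ 2 * U ω ^ 2 := by
      have h1 : (-η * U ω) ^ 2 = η ^ 2 * U ω ^ 2 := by ring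
      rw [h1, ← mul_assoc]
      have : (0:ℝ) ≤ η ^ 2 * U ω ^ 2 := by positivity
      nlinarith
    linarith
  -- integrability of exp(-ηU)
  have hIexp : Integrable (fun ω => Real.exp (-η * U ω)) Q := by
    refine Integrable.mono' (integrable_const (Real.exp (η * b))) hmeas ?_
    filter_upwards [hUb] with ω hω
    rw [Real.norm_eq_abs, abs_of_pos (Real.exp_pos _)]
    apply Real.exp_le_exp.2
    nlinarith
  have hIpos : 0 < ∫ ω, Real.exp (-η * U ω) ∂Q := by
    have : (fun ω => Real.exp (-η * U ω)) = fun ω => Real.exp ((fun ω => -η * U ω) ω) := rfl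
    exact integral_exp_pos hIexp
  -- integral bound
  have hintle : ∫ ω, Real.exp (-η * U ω) ∂Q ≤
      1 + (-η * m) + cη * η ^ 2 * ∫ ω, U ω ^ 2 ∂Q := by
    have hrhs : Integrable (fun ω => 1 + (-η * U ω) + cη * η ^ 2 * U ω ^ 2) Q := by
      apply Integrable.add
      · exact (integrable_const 1).add (hUint.const_mul (-η))
      · exact hU2int.const_mul _
    have h12 : Integrable (fun ω => 1 + -η * U ω) Q :=
      (integrable_const (1 : ℝ)).add (hUint.const_mul (-η))
    have heq : ∫ ω, (1 + -η * U ω + cη * η ^ 2 * U ω ^ 2) ∂Q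
        = 1 + -η * m + cη * η ^ 2 * ∫ ω, U ω ^ 2 ∂Q := by
      rw [integral_add h12 (hU2int.const_mul _),
        integral_add (integrable_const (1 : ℝ)) (hUint.const_mul (-η)),
        integral_const, integral_const_mul, integral_const_mul]
      simp [hm]
    have := integral_mono_ae hIexp hrhs hpt
    rw [heq] at this
    linarith
  -- conclude
  have hexp : ∫ ω, Real.exp (-η * U ω) ∂Q ≤
      Real.exp (-η * m + cη * η ^ 2 * ∫ ω, U ω ^ 2 ∂Q) := by
    calc ∫ ω, Real.exp (-η * U ω) ∂Q
        ≤ 1 + (-η * m) + cη * η ^ 2 * ∫ ω, U ω ^ 2 ∂Q := hintle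
      _ ≤ Real.exp (-η * m + cη * η ^ 2 * ∫ ω, U ω ^ 2 ∂Q) := by
          have := Real.add_one_le_exp (-η * m + cη * η ^ 2 * ∫ ω, U ω ^ 2 ∂Q)
          linarith
  have hrw : (fun ω => Real.exp (η * (m - U ω)))
      = fun ω => Real.exp (η * m) * Real.exp (-η * U ω) := by
    funext ω
    rw [← Real.exp_add]
    ring_nf
  rw [show (∫ ω, Real.exp (η * (m - U ω)) ∂Q)
      = Real.exp (η * m) * ∫ ω, Real.exp (-η * U ω) ∂Q by
    rw [← integral_const_mul]; exact congrArg _ hrw]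
  rw [Real.log_mul (Real.exp_pos _).ne' hIpos.ne', Real.log_exp]
  have hlog : Real.log (∫ ω, Real.exp (-η * U ω) ∂Q) ≤
      -η * m + cη * η ^ 2 * ∫ ω, U ω ^ 2 ∂Q :=
    (Real.log_le_iff_le_exp hIpos).2 hexp
  linarith
end
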